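/- For 0≤i≤d one has η*_i(A*) E_d E*_0 = (φ_d φ_{d−1} ⋯ φ_{d−i+1} / τ_d(θ_d)) · τ_{d−i}(A) E*_0, where τ_d(θ_d) = (θ_d−θ_0)(θ_d−θ_1)⋯(θ_d−θ_{d−1}) is nonzero since θ_0,…,θ_d are mutually distinct. -/

import Mathlib

open Polynomial Matrix Finset

noncomputable section

/-- The lower bidiagonal matrix with diagonal entries `θ 0, …, θ d` and
subdiagonal entries `1`. -/
def matA {K : Type*} [Field K] (d : ℕ) (θ : ℕ → K) :
    Matrix (Fin (d + 1)) (Fin (d + 1)) K :=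
  Matrix.of fun i j =>
    if (i : ℕ) = (j : ℕ) then θ (i : ℕ)
    else if (i : ℕ) = (j : ℕ) + 1 then 1 else 0

/-- The upper bidiagonal matrix with diagonal entries `θs 0, …, θs d` and
superdiagonal entries `φ 1, …, φ d` (the `(i-1,i)`-entry is `φ i`). -/
def matAs {K : Type*} [Field K] (d : ℕ) (θs φ : ℕ → K) :
    Matrix (Fin (d + 1)) (Fin (d + 1)) K :=
  Matrix.of fun i j =>
    if (i : ℕ) = (j : ℕ) then θs (i : ℕ)
    else if (j : ℕ) = (i : ℕ) + 1 then φ (j : ℕ) else 0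

/-- The primitive idempotent `E_i = ∏_{j ≠ i} (M - θ_j I)/(θ_i - θ_j)` of a matrix `M`
with eigenvalues `θ 0, …, θ d`. -/
def primIdem {K : Type*} [Field K] (d : ℕ) (θ : ℕ → K)
    (M : Matrix (Fin (d + 1)) (Fin (d + 1)) K) (i : ℕ) :
    Matrix (Fin (d + 1)) (Fin (d + 1)) K :=
  Polynomial.aeval M (∏ j ∈ (Finset.range (d + 1)).erase i,
    (Polynomial.C ((θ i - θ j)⁻¹) * (Polynomial.X - Polynomial.C (θ j))))

/-- `τ_i(λ) = (λ - θ_0)(λ - θ_1)⋯(λ - θ_{i-1})`. -/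
def tauPoly {K : Type*} [Field K] (θ : ℕ → K) (i : ℕ) : Polynomial K :=
  ∏ k ∈ Finset.range i, (Polynomial.X - Polynomial.C (θ k))

/-- `η_i(λ) = (λ - θ_d)(λ - θ_{d-1})⋯(λ - θ_{d-i+1})`. -/
def etaPoly {K : Type*} [Field K] (d : ℕ) (θ : ℕ → K) (i : ℕ) : Polynomial K :=
  ∏ k ∈ Finset.range i, (Polynomial.X - Polynomial.C (θ (d - k)))

lemma charpoly_matAs {K : Type*} [Field K] (d : ℕ) (θs φ : ℕ → K) :
    (matAs d θs φ).charpoly = ∏ j ∈ Finset.range (d+1), (X - C (θs j)) := by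
  have hbt : (charmatrix (matAs d θs φ)).BlockTriangular id := by
    intro i j hij
    simp only [id] at hij
    have h1 : (i:ℕ) ≠ (j:ℕ) := by omega
    have h2 : (j:ℕ) ≠ (i:ℕ) + 1 := by omega
    have hij' : i ≠ j := fun h => h1 (by rw [h])
    simp [charmatrix_apply, Matrix.diagonal_apply_ne _ hij', matAs, h1, h2]
  rw [Matrix.charpoly, Matrix.det_of_upperTriangular hbt]
  rw [← Fin.prod_univ_eq_prod_range (fun j => (X - C (θs j)))]
  apply Finset.prod_congr rfl
  intro i _
  have : i = i := rfl
  simp [charmatrix_apply, Matrix.diagonal_apply_eq, matAs]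


lemma eigen_Es0 {K : Type*} [Field K] (d : ℕ) (θs φ : ℕ → K) :
    matAs d θs φ * primIdem d θs (matAs d θs φ) 0
      = θs 0 • primIdem d θs (matAs d θs φ) 0 := by
  set M := matAs d θs φ with hM
  have key : (M - θs 0 • 1) * primIdem d θs M 0 = 0 := by
    have h1 : (M - θs 0 • 1) = aeval M (X - C (θs 0)) := by
      simp [Algebra.algebraMap_eq_smul_one]
    rw [h1, primIdem, ← _root_.map_mul]
    have h2 : (X - C (θs 0)) * (∏ j ∈ (Finset.range (d + 1)).erase 0,
        (C ((θs 0 - θs j)⁻¹) * (X - C (θs j))))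
        = C (∏ j ∈ (Finset.range (d + 1)).erase 0, (θs 0 - θs j)⁻¹) *
          ((matAs d θs φ).charpoly) := by
      rw [Finset.prod_mul_distrib, ← map_prod, charpoly_matAs]
      rw [← Finset.mul_prod_erase (Finset.range (d+1)) _ (by simp : 0 ∈ Finset.range (d+1))]
      ring
    rw [h2, _root_.map_mul, Matrix.aeval_self_charpoly, mul_zero]
  have h3 : M * primIdem d θs M 0 - θs 0 • primIdem d θs M 0 = 0 := by
    rw [← key, sub_mul, smul_mul_assoc, one_mul]
  exact sub_eq_zero.mp h3

lemma Es0_apply_ne {K : Type*} [Field K] (d : ℕ) (θs φ : ℕ → K)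
    (hθs : ∀ i ≤ d, ∀ j ≤ d, θs i = θs j → i = j) :
    ∀ (m : Fin (d+1)) (j : Fin (d+1)), (m:ℕ) ≠ 0 →
      primIdem d θs (matAs d θs φ) 0 m j = 0 := by
  set Z := primIdem d θs (matAs d θs φ) 0 with hZ
  have H := eigen_Es0 d θs φ
  have row : ∀ (m j : Fin (d+1)),
      (∑ l, matAs d θs φ m l * Z l j) = θs 0 * Z m j := by
    intro m j
    have := congr_fun (congr_fun H m) j
    simpa [Matrix.mul_apply, Matrix.smul_apply, smul_eq_mul] using this
  have claim : ∀ k : ℕ, ∀ (m : Fin (d+1)) (j : Fin (d+1)),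
      (m:ℕ) = d - k → 1 ≤ (m:ℕ) → Z m j = 0 := by
    intro k
    induction k with
    | zero =>
      intro m j hm h1
      have hmd : (m:ℕ) = d := by omega
      have hsum := row m j
      rw [Finset.sum_eq_single m (by
        intro l _ hl
        have h1' : (m:ℕ) ≠ (l:ℕ) := fun h => hl (Fin.ext h.symm)
        have h2' : (l:ℕ) ≠ (m:ℕ) + 1 := by have := l.isLt; omega
        simp [matAs, h1', h2'])
        (by simp)] at hsum
      have hdiag : matAs d θs φ m m = θs m := by simp [matAs]
      rw [hdiag] at hsum
      have : (θs (m:ℕ) - θs 0) * Z m j = 0 := by linear_combination hsum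
      rcases mul_eq_zero.mp this with h | h
      · exfalso
        have := hθs (m:ℕ) (by omega) 0 (by omega) (sub_eq_zero.mp h)
        omega
      · exact h
    | succ k ih =>
      intro m j hm h1
      by_cases hmd : (m:ℕ) = d
      · -- same as base case
        have hsum := row m j
        rw [Finset.sum_eq_single m (by
          intro l _ hl
          have h1' : (m:ℕ) ≠ (l:ℕ) := fun h => hl (Fin.ext h.symm)
          have h2' : (l:ℕ) ≠ (m:ℕ) + 1 := by have := l.isLt; omega
          simp [matAs, h1', h2'])
          (by simp)] at hsum
        have hdiag : matAs d θs φ m m = θs m := by simp [matAs]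
        rw [hdiag] at hsum
        have : (θs (m:ℕ) - θs 0) * Z m j = 0 := by linear_combination hsum
        rcases mul_eq_zero.mp this with h | h
        · exfalso
          have := hθs (m:ℕ) (by omega) 0 (by omega) (sub_eq_zero.mp h)
          omega
        · exact h
      · have hmlt : (m:ℕ) < d := by have := m.isLt; omega
        set m' : Fin (d+1) := ⟨(m:ℕ)+1, by omega⟩ with hm'
        have hne : m ≠ m' := by
          intro h; have := congrArg (Fin.val) h; simp [hm'] at this
        have hsum := row m j
        rw [Fintype.sum_eq_add m m' hne (by
          intro l ⟨hl1, hl2⟩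
          have h1' : (m:ℕ) ≠ (l:ℕ) := fun h => hl1 (Fin.ext h.symm)
          have h2' : (l:ℕ) ≠ (m:ℕ) + 1 := by
            intro h; exact hl2 (Fin.ext (by simp [hm', h]))
          simp [matAs, h1', h2'])] at hsum
        have hdiag : matAs d θs φ m m = θs m := by simp [matAs]
        have hsup : matAs d θs φ m m' = φ ((m:ℕ)+1) := by
          have : (m:ℕ) ≠ (m':ℕ) := by simp [hm']
          simp [matAs, this, hm']
        rw [hdiag, hsup] at hsum
        have hZm' : Z m' j = 0 := by
          apply ih m' j
          · simp [hm']; omega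
          · simp [hm']
        rw [hZm'] at hsum
        have : (θs (m:ℕ) - θs 0) * Z m j = 0 := by linear_combination hsum
        rcases mul_eq_zero.mp this with h | h
        · exfalso
          have := hθs (m:ℕ) (by omega) 0 (by omega) (sub_eq_zero.mp h)
          omega
        · exact h
  intro m j hm
  exact claim (d - (m:ℕ)) m j (by have := m.isLt; omega) (by omega)

-- L3: reduction via rank-1 right factor
lemma rank1_reduce {K : Type*} [Field K] (d : ℕ)
    (Z M N : Matrix (Fin (d+1)) (Fin (d+1)) K) (c : K)
    (hZ : ∀ (m j : Fin (d+1)), (m:ℕ) ≠ 0 → Z m j = 0)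
    (hcol : ∀ r : Fin (d+1), M r 0 = c * N r 0) :
    M * Z = c • (N * Z) := by
  ext i j
  rw [Matrix.smul_apply, Matrix.mul_apply, Matrix.mul_apply,
    Finset.sum_eq_single (0 : Fin (d+1))
      (fun l _ hl => by rw [hZ l j (fun h => hl (Fin.ext h)), mul_zero])
      (by simp),
    Finset.sum_eq_single (0 : Fin (d+1))
      (fun l _ hl => by rw [hZ l j (fun h => hl (Fin.ext h)), mul_zero])
      (by simp)]
  rw [hcol i, smul_eq_mul]; ring

-- L4: column 0 of tau_k(A)
lemma tau_col {K : Type*} [Field K] (d : ℕ) (θ : ℕ → K) :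
    ∀ k ≤ d, ∀ i : Fin (d+1),
      (Polynomial.aeval (matA d θ) (tauPoly θ k)) i 0
        = if (i:ℕ) = k then 1 else 0 := by
  intro k
  induction k with
  | zero =>
    intro _ i
    rw [tauPoly, Finset.prod_range_zero, map_one, Matrix.one_apply]
    simp only [Fin.ext_iff, Fin.val_zero]
  | succ k ih =>
    intro hk i
    have hk' : k ≤ d := by omega
    rw [tauPoly, Finset.prod_range_succ, mul_comm, ← tauPoly, _root_.map_mul]
    have haev : (Polynomial.aeval (matA d θ)) (X - C (θ k))
        = matA d θ - θ k • 1 := by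
      simp [Algebra.algebraMap_eq_smul_one]
    rw [haev, Matrix.mul_apply]
    rw [Finset.sum_eq_single (⟨k, by omega⟩ : Fin (d+1))
      (fun l _ hl => by
        rw [ih hk' l]
        have : (l:ℕ) ≠ k := fun h => hl (Fin.ext h)
        simp [this])
      (by simp)]
    rw [ih hk' ⟨k, by omega⟩]
    simp only [Matrix.sub_apply, Matrix.smul_apply, Matrix.one_apply]
    by_cases h1 : (i:ℕ) = k + 1
    · have h2 : (i:ℕ) ≠ k := by omega
      have h3 : i ≠ (⟨k, by omega⟩ : Fin (d+1)) := fun h => h2 (by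
        simpa using congrArg Fin.val h)
      simp [matA, h2, h1, h3]
    · by_cases h2 : (i:ℕ) = k
      · have h3 : i = (⟨k, by omega⟩ : Fin (d+1)) := Fin.ext h2
        simp [matA, h2, h3, h1]
      · have h3 : i ≠ (⟨k, by omega⟩ : Fin (d+1)) := fun h => h2 (by
          simpa using congrArg Fin.val h)
        simp [matA, h2, h1, h3]

-- L5: column 0 of E_d
lemma Ed_col {K : Type*} [Field K] (d : ℕ) (θ : ℕ → K) (i : Fin (d+1)) :
    (primIdem d θ (matA d θ) d) i 0
      = ((tauPoly θ d).eval (θ d))⁻¹ * (if (i:ℕ) = d then 1 else 0) := by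
  have herase : (Finset.range (d+1)).erase d = Finset.range d := by
    ext x; simp; omega
  have hsplit : (∏ j ∈ (Finset.range (d + 1)).erase d,
      (C ((θ d - θ j)⁻¹) * (X - C (θ j))))
      = C (∏ j ∈ Finset.range d, (θ d - θ j)⁻¹) * tauPoly θ d := by
    rw [herase, Finset.prod_mul_distrib, ← map_prod, tauPoly]
  have heval : (tauPoly θ d).eval (θ d) = ∏ j ∈ Finset.range d, (θ d - θ j) := by
    simp [tauPoly, Polynomial.eval_prod]
  rw [primIdem, hsplit, _root_.map_mul, aeval_C, heval, ← Finset.prod_inv_distrib]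
  rw [Algebra.algebraMap_eq_smul_one, Matrix.smul_mul, one_mul, Matrix.smul_apply,
    tau_col d θ d le_rfl i, smul_eq_mul]

-- L6: column d of eta*_i(A*)
lemma eta_col {K : Type*} [Field K] (d : ℕ) (θs φ : ℕ → K) :
    ∀ i ≤ d, ∀ r : Fin (d+1),
      (Polynomial.aeval (matAs d θs φ) (etaPoly d θs i)) r ⟨d, by omega⟩
        = (∏ k ∈ Finset.Icc (d - i + 1) d, φ k) * (if (r:ℕ) = d - i then 1 else 0) := by
  intro i
  induction i with
  | zero =>
    intro _ r
    have : Finset.Icc (d+1) d = ∅ := by simp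
    simp [etaPoly, Matrix.one_apply, Fin.ext_iff, this]
  | succ i ih =>
    intro hi r
    have hi' : i ≤ d := by omega
    rw [etaPoly, Finset.prod_range_succ, mul_comm, ← etaPoly, _root_.map_mul]
    have haev : (Polynomial.aeval (matAs d θs φ)) (X - C (θs (d - i)))
        = matAs d θs φ - θs (d - i) • 1 := by
      simp [Algebra.algebraMap_eq_smul_one]
    rw [haev, Matrix.mul_apply]
    rw [Finset.sum_eq_single (⟨d - i, by omega⟩ : Fin (d+1))
      (fun l _ hl => by
        rw [ih hi' l]
        have : (l:ℕ) ≠ d - i := fun h => hl (Fin.ext h)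
        simp [this])
      (by simp)]
    have hE : (matAs d θs φ - θs (d - i) • 1) r ⟨d - i, by omega⟩
        = if (r:ℕ) + 1 = d - i then φ (d - i) else 0 := by
      simp only [Matrix.sub_apply, Matrix.smul_apply, smul_eq_mul, Matrix.one_apply,
        matAs, Matrix.of_apply, Fin.ext_iff]
      split_ifs with c1 c2 c3 c4 c5 c6
      all_goals try omega
      all_goals try ring
      all_goals (rw [c1]; ring)
    have hprod : (∏ k ∈ Finset.Icc (d - (i+1) + 1) d, φ k)
        = φ (d - i) * ∏ k ∈ Finset.Icc (d - i + 1) d, φ k := by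
      have h1 : Finset.Icc (d - (i+1) + 1) d = insert (d - i) (Finset.Icc (d - i + 1) d) := by
        ext x; simp; omega
      rw [h1, Finset.prod_insert (by simp)]
    rw [ih hi' ⟨d - i, by omega⟩, hE, hprod, if_pos rfl]
    by_cases hr : (r:ℕ) = d - (i+1)
    · rw [if_pos (by omega), if_pos hr]; ring
    · rw [if_neg (by omega), if_neg hr]; ring

theorem etas_ED_EsZero {K : Type*} [Field K] (d : ℕ) (θ θs φ : ℕ → K)
    (hθ : ∀ i ≤ d, ∀ j ≤ d, θ i = θ j → i = j)
    (hθs : ∀ i ≤ d, ∀ j ≤ d, θs i = θs j → i = j)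
    (hφ : ∀ i, 1 ≤ i → i ≤ d → φ i ≠ 0)
    (hE0 : ∀ i ≤ d, ∀ j ≤ d, 1 < |(i : ℤ) - (j : ℤ)| →
      primIdem d θ (matA d θ) i * matAs d θs φ * primIdem d θ (matA d θ) j = 0)
    (hE1 : ∀ i ≤ d, ∀ j ≤ d, |(i : ℤ) - (j : ℤ)| = 1 →
      primIdem d θ (matA d θ) i * matAs d θs φ * primIdem d θ (matA d θ) j ≠ 0)
    (hEs0 : ∀ i ≤ d, ∀ j ≤ d, 1 < |(i : ℤ) - (j : ℤ)| →
      primIdem d θs (matAs d θs φ) i * matA d θ * primIdem d θs (matAs d θs φ) j = 0)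
    (hEs1 : ∀ i ≤ d, ∀ j ≤ d, |(i : ℤ) - (j : ℤ)| = 1 →
      primIdem d θs (matAs d θs φ) i * matA d θ * primIdem d θs (matAs d θs φ) j ≠ 0) :
    ∀ i ≤ d,
      Polynomial.aeval (matAs d θs φ) (etaPoly d θs (i)) * primIdem d θ (matA d θ) d * primIdem d θs (matAs d θs φ) 0 = ((∏ k ∈ Finset.Icc (d - i + 1) (d), φ k) / (tauPoly θ d).eval (θ d)) • (Polynomial.aeval (matA d θ) (tauPoly θ (d - i)) * primIdem d θs (matAs d θs φ) 0) := by
  intro i hi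
  show _ * primIdem d θs (matAs d θs φ) 0 = _ • (_ * primIdem d θs (matAs d θs φ) 0)
  apply rank1_reduce d _ _ _ _ (Es0_apply_ne d θs φ hθs)
  intro r
  rw [Matrix.mul_apply]
  rw [Finset.sum_eq_single (⟨d, by omega⟩ : Fin (d+1))
    (fun l _ hl => by rw [Ed_col]
                      have : (l:ℕ) ≠ d := fun h => hl (Fin.ext h)
                      rw [if_neg this, mul_zero, mul_zero])
    (by simp)]
  rw [Ed_col, eta_col d θs φ i hi r, tau_col d θ (d - i) (by omega) r]
  have : (⟨d, by omega⟩ : Fin (d+1)).val = d := rfl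
  rw [this, if_pos rfl, div_eq_mul_inv]
  ring
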